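/- Let φ : [0, r] → ℝ³ be a C² unit-speed curve with φ'(0) = e for a unit vector e, satisfying the curvature bound |φ''(s)| ≤ b and r ≤ 1/(4b). Then for every s ∈ [0, r], s ≤ (8/7)|φ(s) - φ(0)|. -/

import Mathlib

/-- a `C²` unit-speed curve `φ : [0,r] → ℝ³` with `φ'(0) = e` a unit
vector, `|φ''| ≤ b` and `r ≤ 1/(4b)` satisfies `s ≤ (8/7)|φ(s) - φ(0)|` for every
`s ∈ [0,r]`. -/
theorem arclength_le_chord
    (b r : ℝ) (hb : 0 < b) (hr : r ≤ 1 / (4 * b))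
    (φ φ' φ'' : ℝ → EuclideanSpace ℝ (Fin 3))
    (e : EuclideanSpace ℝ (Fin 3)) (he : ‖e‖ = 1)
    (hder1 : ∀ s ∈ Set.Icc 0 r, HasDerivWithinAt φ (φ' s) (Set.Icc 0 r) s)
    (hder2 : ∀ s ∈ Set.Icc 0 r, HasDerivWithinAt φ' (φ'' s) (Set.Icc 0 r) s)
    (hcont2 : ContinuousOn φ'' (Set.Icc 0 r))
    (hunit : ∀ s ∈ Set.Icc 0 r, ‖φ' s‖ = 1)
    (hφ'0 : φ' 0 = e)
    (hbnd : ∀ s ∈ Set.Icc 0 r, ‖φ'' s‖ ≤ b)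
    (s : ℝ) (hs : s ∈ Set.Icc 0 r) :
    s ≤ 8 / 7 * ‖φ s - φ 0‖ := by
  obtain ⟨hs0, hsr⟩ := hs
  have h0r : (0:ℝ) ∈ Set.Icc 0 r := ⟨le_refl _, hs0.trans hsr⟩
  -- Step 1: ‖φ' t - e‖ ≤ b * t on [0,r]
  have step1 : ∀ t ∈ Set.Icc (0:ℝ) r, ‖φ' t - e‖ ≤ b * t := by
    intro t ht
    have := Convex.norm_image_sub_le_of_norm_hasDerivWithin_le hder2 hbnd
      (convex_Icc 0 r) h0r ht
    rw [hφ'0] at this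
    simpa [abs_of_nonneg ht.1] using this
  -- Step 2: ‖φ s - φ 0 - s • e‖ ≤ b/2 * s^2
  set f : ℝ → EuclideanSpace ℝ (Fin 3) := fun t => φ t - φ 0 - t • e with hf
  have hfc : ContinuousOn f (Set.Icc 0 r) := by
    apply ContinuousOn.sub
    · exact ContinuousOn.sub (fun x hx => (hder1 x hx).continuousWithinAt) continuousOn_const
    · exact (continuous_id.smul continuous_const).continuousOn
  have hfd : ∀ t ∈ Set.Ico (0:ℝ) r, HasDerivWithinAt f (φ' t - e) (Set.Ici t) t := by
    intro t ht
    have h1 : HasDerivWithinAt φ (φ' t) (Set.Ici t) t := by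
      apply (hder1 t (Set.Ico_subset_Icc_self ht)).mono_of_mem_nhdsWithin
      exact Icc_mem_nhdsGE_of_mem ht
    have h2 : HasDerivWithinAt (fun t : ℝ => t • e) ((1:ℝ) • e) (Set.Ici t) t :=
      (hasDerivWithinAt_id t _).smul_const e
    have h3 := (h1.sub_const (φ 0)).sub h2
    rw [one_smul] at h3
    exact h3
  have hB : ∀ x : ℝ, HasDerivAt (fun t => b / 2 * t ^ 2) (b * x) x := by
    intro x
    have := (hasDerivAt_pow 2 x).const_mul (b / 2)
    refine this.congr_deriv ?_
    ring
  have step2 : ‖f s‖ ≤ b / 2 * s ^ 2 := by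
    refine image_norm_le_of_norm_deriv_right_le_deriv_boundary hfc hfd ?_ hB ?_ ⟨hs0, hsr⟩
    · simp [hf]
    · intro x hx
      exact step1 x (Set.Ico_subset_Icc_self hx)
  -- arithmetic finish
  have hbs : b * s ≤ 1 / 4 := by
    have h1 : b * r ≤ b * (1 / (4 * b)) := mul_le_mul_of_nonneg_left hr hb.le
    have h2 : b * (1 / (4 * b)) = 1 / 4 := by field_simp
    nlinarith
  have hse : ‖(s : ℝ) • e‖ = s := by
    rw [norm_smul, he, Real.norm_eq_abs, abs_of_nonneg hs0, mul_one]
  have key : s - ‖φ s - φ 0‖ ≤ b / 2 * s ^ 2 := by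
    calc s - ‖φ s - φ 0‖ = ‖s • e‖ - ‖φ s - φ 0‖ := by rw [hse]
      _ ≤ ‖s • e - (φ s - φ 0)‖ := norm_sub_norm_le _ _
      _ = ‖f s‖ := by rw [← norm_neg]; congr 1; simp only [hf]; abel
      _ ≤ b / 2 * s ^ 2 := step2
  nlinarith [norm_nonneg (φ s - φ 0)]
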